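/- Pre-Jacobi (pre-Lie) identity for the Gerstenhaber circle product: for f ∈ C^m(A,A), g ∈ C^n(A,A) and h ∈ C^q(A,A), f ∘ (g ∘ h) − (f ∘ g) ∘ h = (−1)^{(n−1)(q−1)} ( f ∘ (h ∘ g) − (f ∘ h) ∘ g ). -/

import Mathlib

variable {R A : Type} [CommRing R] [Ring A] [Algebra R A]

/-- A Hochschild `n`-cochain, viewed as a function on sequences (only the first `n`
entries of the sequence are relevant). -/
def toC {n : ℕ} (f : MultilinearMap R (fun _ : Fin n => A) A) : (ℕ → A) → A :=
  fun a => f (fun i => a i.val)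

/-- The Hochschild differential `δ : C^n(A,A) → C^{n+1}(A,A)`:
`δf(a₁,…,a_{n+1}) = a₁·f(a₂,…,a_{n+1}) + Σ_{i=1}^{n} (−1)^i f(a₁,…,aᵢ·a_{i+1},…,a_{n+1})
 + (−1)^{n+1} f(a₁,…,a_n)·a_{n+1}` (written here with `0`-based indexing). -/
def hochδ (n : ℕ) (f : (ℕ → A) → A) : (ℕ → A) → A :=
  fun a =>
    a 0 * f (fun i => a (i + 1))
      + ∑ i ∈ Finset.range n, ((-1 : ℤ) ^ (i + 1)) •
          f (fun j => if j < i then a j else if j = i then a i * a (i + 1) else a (j + 1))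
      + ((-1 : ℤ) ^ (n + 1)) • (f a * a n)

/-- The cup product of an `m`-cochain and an `n`-cochain:
`(f ⌣ g)(a₁,…,a_{m+n}) = f(a₁,…,a_m) · g(a_{m+1},…,a_{m+n})`. -/
def cup (m n : ℕ) (f g : (ℕ → A) → A) : (ℕ → A) → A :=
  fun a => f a * g (fun j => a (m + j))

/-- The Gerstenhaber circle product of an `m`-cochain and an `n`-cochain:
`(f ∘ g)(a₁,…,a_{m+n−1}) = Σ_{i=0}^{m−1} (−1)^{i(n−1)}
  f(a₁,…,a_i, g(a_{i+1},…,a_{i+n}), a_{i+n+1},…,a_{m+n−1})`. -/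
def circ (m n : ℕ) (f g : (ℕ → A) → A) : (ℕ → A) → A :=
  fun a => ∑ i ∈ Finset.range m, ((-1 : ℤ) ^ (i * (n - 1))) •
    f (fun j => if j < i then a j
        else if j = i then g (fun k => a (i + k))
        else a (j + n - 1))

section GerstenhaberAux

def ins (w : ℕ) (G : (ℕ → A) → A) (i : ℕ) (a : ℕ → A) : ℕ → A :=
  fun j => if j < i then a j else if j = i then G (fun k => a (i + k)) else a (j + w - 1)

def dd (w₁ w₂ : ℕ) (G H : (ℕ → A) → A) (u v : ℕ) (a : ℕ → A) : ℕ → A := fun j =>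
  if j < u then a j
  else if j = u then G (fun k => a (u + k))
  else if j < v then a (j + w₁ - 1)
  else if j = v then H (fun k => a (v + w₁ - 1 + k))
  else a (j + w₁ + w₂ - 2)

lemma circ_eq (m w : ℕ) (F G : (ℕ → A) → A) (a : ℕ → A) :
    circ m w F G a = ∑ i ∈ Finset.range m, ((-1 : ℤ) ^ (i * (w - 1))) • F (ins w G i a) := rfl

lemma ns1 (a b : ℕ) : a + (b + 1) - 1 = a + b := by omega
lemma ns2 (a b : ℕ) : a + 1 + b - 1 = a + b := by omega

lemma sgn {a b : ℕ} (x : A) (hab : a = b) :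
    ((-1 : ℤ)) ^ a • x = ((-1 : ℤ)) ^ b • x := by rw [hab]

lemma sign_shift (N Q : ℕ) (e : ℕ) (x : A) :
    ((-1 : ℤ)) ^ e • x = ((-1 : ℤ)) ^ (N * Q) • ((-1 : ℤ)) ^ (e + N * Q) • x := by
  have h2 : ((-1 : ℤ)) ^ (N * Q) * ((-1 : ℤ)) ^ (e + N * Q) = ((-1 : ℤ)) ^ e := by
    rw [← pow_add]
    have h3 : N * Q + (e + N * Q) = e + 2 * (N * Q) := by ring
    rw [h3, pow_add, pow_mul]
    norm_num
  rw [smul_smul, h2]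

lemma toC_congr {n : ℕ} (f : MultilinearMap R (fun _ : Fin n => A) A) {x y : ℕ → A}
    (hxy : ∀ j < n, x j = y j) : toC f x = toC f y := by
  unfold toC; congr 1; funext i; exact hxy i i.isLt

lemma ins_eq_update {m : ℕ} (f : MultilinearMap R (fun _ : Fin m => A) A)
    (w i : ℕ) (him : i < m) (G : (ℕ → A) → A) (a : ℕ → A) :
    toC f (ins w G i a) =
      f (Function.update (fun j : Fin m => if (j : ℕ) < i then a j else a (j + w - 1))
        ⟨i, him⟩ (G fun k => a (i + k))) := by
  unfold toC
  congr 1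
  funext j
  rcases eq_or_ne j ⟨i, him⟩ with hj | hj
  · subst hj; simp [ins]
  · have hj' : (j : ℕ) ≠ i := fun hc => hj (Fin.ext hc)
    rw [Function.update_of_ne hj]
    by_cases hlt : (j : ℕ) < i <;> simp [ins, hlt, hj']

lemma toC_ins_sum {m : ℕ} (f : MultilinearMap R (fun _ : Fin m => A) A)
    (w i : ℕ) (him : i < m) (a : ℕ → A) (s : Finset ℕ) (c : ℕ → ℤ)
    (G : ℕ → (ℕ → A) → A) :
    toC f (ins w (fun b => ∑ l ∈ s, c l • G l b) i a) =
      ∑ l ∈ s, c l • toC f (ins w (G l) i a) := by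
  simp only [ins_eq_update f w i him]
  set v : Fin m → A := fun j : Fin m => if (j : ℕ) < i then a j else a (j + w - 1) with hv
  have key : ∀ X : A, f (Function.update v ⟨i, him⟩ X) = f.toLinearMap v ⟨i, him⟩ X := by
    intro X; simp [MultilinearMap.toLinearMap]
  rw [key]
  simp only [key]
  rw [map_sum]
  refine Finset.sum_congr rfl fun l _ => ?_
  rw [map_zsmul]

variable {m n q : ℕ} (f : MultilinearMap R (fun _ : Fin m => A) A)
  (g : MultilinearMap R (fun _ : Fin n => A) A)
  (h : MultilinearMap R (fun _ : Fin q => A) A)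

lemma nested_arg (hn : 1 ≤ n) (hq : 1 ≤ q) (i l : ℕ) (hl : l < n) (a : ℕ → A) :
    toC f (ins n (toC g) i (ins q (toC h) (i + l) a)) =
      toC f (ins (n + q - 1) (fun b => toC g (ins q (toC h) l b)) i a) := by
  apply toC_congr
  intro j _
  simp only [ins]
  split_ifs <;>
    first
      | rfl
      | (exfalso; omega)
      | (congr 1; omega)
      | (apply toC_congr; intro k hk; (try simp only [ins]);
         first
           | (congr 1; omega)
           | (split_ifs <;>
               first
                 | rfl
                 | (exfalso; omega)
                 | (congr 1; omega)
                 | (apply toC_congr; intro k' hk'; congr 1; omega)))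

lemma argA (hn : 1 ≤ n) (hq : 1 ≤ q) (p i : ℕ) (hpi : p < i) (a : ℕ → A) :
    toC f (ins n (toC g) i (ins q (toC h) p a)) =
      toC f (dd q n (toC h) (toC g) p i a) := by
  apply toC_congr
  intro j _
  simp only [ins, dd]
  split_ifs <;>
    first
      | rfl
      | (exfalso; omega)
      | (congr 1; omega)
      | (apply toC_congr; intro k hk; (try simp only [ins]);
         first
           | (congr 1; omega)
           | (split_ifs <;>
               first
                 | rfl
                 | (exfalso; omega)
                 | (congr 1; omega)
                 | (apply toC_congr; intro k' hk'; congr 1; omega)))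

lemma argB (hn : 1 ≤ n) (hq : 1 ≤ q) (i v : ℕ) (hiv : i < v) (a : ℕ → A) :
    toC f (ins n (toC g) i (ins q (toC h) (v + n - 1) a)) =
      toC f (dd n q (toC g) (toC h) i v a) := by
  apply toC_congr
  intro j _
  simp only [ins, dd]
  split_ifs <;>
    first
      | rfl
      | (exfalso; omega)
      | (congr 1; omega)
      | (apply toC_congr; intro k hk; (try simp only [ins]);
         first
           | (congr 1; omega)
           | (split_ifs <;>
               first
                 | rfl
                 | (exfalso; omega)
                 | (congr 1; omega)
                 | (apply toC_congr; intro k' hk'; congr 1; omega)))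

lemma key (hn : 1 ≤ n) (hq : 1 ≤ q) (a : ℕ → A) :
    circ (m + n - 1) q (circ m n (toC f) (toC g)) (toC h) a =
      circ m (n + q - 1) (toC f) (circ n q (toC g) (toC h)) a
      + (∑ v ∈ Finset.range m, ∑ u ∈ Finset.range v,
          ((-1 : ℤ) ^ (u * (n - 1) + (v + n - 1) * (q - 1))) •
            toC f (dd n q (toC g) (toC h) u v a))
      + ((-1 : ℤ) ^ ((n - 1) * (q - 1))) •
        (∑ v ∈ Finset.range m, ∑ u ∈ Finset.range v,
          ((-1 : ℤ) ^ (u * (q - 1) + (v + q - 1) * (n - 1))) •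
            toC f (dd q n (toC h) (toC g) u v a)) := by
  obtain ⟨N, rfl⟩ : ∃ N, n = N + 1 := ⟨n - 1, by omega⟩
  obtain ⟨Q, rfl⟩ : ∃ Q, q = Q + 1 := ⟨q - 1, by omega⟩
  simp only [ns1, ns2, Nat.add_sub_cancel]
  -- Step 1 : expand the left side as a double sum
  have L1 : circ (m + N) (Q + 1) (circ m (N + 1) (toC f) (toC g)) (toC h) a
      = ∑ i ∈ Finset.range m, ∑ p ∈ Finset.range (m + N),
          ((-1 : ℤ) ^ (p * Q + i * N)) •
            toC f (ins (N + 1) (toC g) i (ins (Q + 1) (toC h) p a)) := by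
    rw [show (∑ i ∈ Finset.range m, ∑ p ∈ Finset.range (m + N),
          ((-1 : ℤ) ^ (p * Q + i * N)) •
            toC f (ins (N + 1) (toC g) i (ins (Q + 1) (toC h) p a)))
        = ∑ p ∈ Finset.range (m + N), ∑ i ∈ Finset.range m,
          ((-1 : ℤ) ^ (p * Q + i * N)) •
            toC f (ins (N + 1) (toC g) i (ins (Q + 1) (toC h) p a)) from Finset.sum_comm]
    rw [circ_eq]
    refine Finset.sum_congr rfl fun p _ => ?_
    rw [circ_eq, Finset.smul_sum]
    refine Finset.sum_congr rfl fun i _ => ?_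
    rw [smul_smul, ← pow_add]
    exact sgn _ (by simp only [Nat.add_sub_cancel])
  rw [L1]
  -- Step 2 : split the inner sum into three regions
  have L2 : ∀ i ∈ Finset.range m,
      (∑ p ∈ Finset.range (m + N), ((-1 : ℤ) ^ (p * Q + i * N)) •
          toC f (ins (N + 1) (toC g) i (ins (Q + 1) (toC h) p a)))
      = (∑ p ∈ Finset.range i, ((-1 : ℤ) ^ (p * Q + i * N)) •
            toC f (ins (N + 1) (toC g) i (ins (Q + 1) (toC h) p a)))
        + ((∑ l ∈ Finset.range (N + 1), ((-1 : ℤ) ^ ((i + l) * Q + i * N)) •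
            toC f (ins (N + 1) (toC g) i (ins (Q + 1) (toC h) (i + l) a)))
        + (∑ v ∈ Finset.Ico (i + 1) m, ((-1 : ℤ) ^ ((v + N) * Q + i * N)) •
            toC f (ins (N + 1) (toC g) i (ins (Q + 1) (toC h) (v + N) a)))) := by
    intro i hi
    rw [Finset.mem_range] at hi
    have h2 : i ≤ i + (N + 1) := by omega
    have h3 : i + (N + 1) ≤ m + N := by omega
    rw [Finset.range_eq_Ico,
        ← Finset.sum_Ico_consecutive _ (Nat.zero_le i) (le_trans h2 h3),
        ← Finset.sum_Ico_consecutive _ h2 h3,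
        ← Finset.range_eq_Ico]
    congr 1
    congr 1
    · rw [Finset.sum_Ico_eq_sum_range]
      rw [show i + (N + 1) - i = N + 1 by omega]
    · rw [Finset.sum_Ico_eq_sum_range, Finset.sum_Ico_eq_sum_range]
      rw [show m + N - (i + (N + 1)) = m - (i + 1) by omega]
      refine Finset.sum_congr rfl fun t _ => ?_
      rw [show i + (N + 1) + t = i + 1 + t + N by omega]
  rw [Finset.sum_congr rfl L2, Finset.sum_add_distrib]
  conv_lhs => rw [Finset.sum_add_distrib]
  -- Step 3 : the middle region is f ∘ (g ∘ h)
  have Hmid : circ m (N + 1 + Q) (toC f) (circ (N + 1) (Q + 1) (toC g) (toC h)) a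
      = ∑ i ∈ Finset.range m, ∑ l ∈ Finset.range (N + 1),
          ((-1 : ℤ) ^ ((i + l) * Q + i * N)) •
            toC f (ins (N + 1) (toC g) i (ins (Q + 1) (toC h) (i + l) a)) := by
    rw [circ_eq]
    refine Finset.sum_congr rfl fun i hi => ?_
    have him : i < m := Finset.mem_range.mp hi
    have e1 : circ (N + 1) (Q + 1) (toC g) (toC h)
        = fun b => ∑ l ∈ Finset.range (N + 1),
            ((-1 : ℤ) ^ (l * Q)) • toC g (ins (Q + 1) (toC h) l b) := rfl
    rw [e1, toC_ins_sum f (N + 1 + Q) i him a (Finset.range (N + 1))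
        (fun l => (-1 : ℤ) ^ (l * Q)) (fun l b => toC g (ins (Q + 1) (toC h) l b)),
      Finset.smul_sum]
    refine Finset.sum_congr rfl fun l hl => ?_
    have na := nested_arg f g h (by omega) (by omega) i l (Finset.mem_range.mp hl) a
    simp only [ns1] at na
    rw [smul_smul, ← pow_add, ← na]
    refine sgn _ ?_
    rw [show N + 1 + Q - 1 = N + Q by omega]
    ring
  rw [← Hmid]
  -- Step 4 : the low region gives the (h,g)-disjoint terms
  have Hlow : (∑ i ∈ Finset.range m, ∑ p ∈ Finset.range i,
        ((-1 : ℤ) ^ (p * Q + i * N)) •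
          toC f (ins (N + 1) (toC g) i (ins (Q + 1) (toC h) p a)))
      = ((-1 : ℤ) ^ (N * Q)) •
          (∑ v ∈ Finset.range m, ∑ u ∈ Finset.range v,
            ((-1 : ℤ) ^ (u * Q + (v + Q) * N)) •
              toC f (dd (Q + 1) (N + 1) (toC h) (toC g) u v a)) := by
    rw [Finset.smul_sum]
    refine Finset.sum_congr rfl fun i _ => ?_
    rw [Finset.smul_sum]
    refine Finset.sum_congr rfl fun p hp => ?_
    have hpi : p < i := Finset.mem_range.mp hp
    rw [argA f g h (by omega) (by omega) p i hpi a]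
    rw [sign_shift N Q (p * Q + i * N)]
    congr 1
    exact sgn _ (by ring)
  rw [Hlow]
  -- Step 5 : the high region gives the (g,h)-disjoint terms
  have Hhigh : (∑ i ∈ Finset.range m, ∑ v ∈ Finset.Ico (i + 1) m,
        ((-1 : ℤ) ^ ((v + N) * Q + i * N)) •
          toC f (ins (N + 1) (toC g) i (ins (Q + 1) (toC h) (v + N) a)))
      = ∑ v ∈ Finset.range m, ∑ u ∈ Finset.range v,
          ((-1 : ℤ) ^ (u * N + (v + N) * Q)) •
            toC f (dd (N + 1) (Q + 1) (toC g) (toC h) u v a) := by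
    have swap := Finset.sum_Ico_Ico_comm' 0 m (fun u v =>
      ((-1 : ℤ) ^ (u * N + (v + N) * Q)) • toC f (dd (N + 1) (Q + 1) (toC g) (toC h) u v a))
    simp only [← Finset.range_eq_Ico] at swap
    rw [← swap]
    refine Finset.sum_congr rfl fun i _ => ?_
    refine Finset.sum_congr rfl fun v hv => ?_
    have hiv : i < v := by have := (Finset.mem_Ico.mp hv).1; omega
    have ab := argB f g h (by omega) (by omega) i v hiv a
    simp only [ns1] at ab
    rw [ab]
    exact sgn _ (by ring)
  rw [Hhigh]
  abel


end GerstenhaberAux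

/-- Pre-Jacobi (pre-Lie) identity for the Gerstenhaber circle product:
`f ∘ (g ∘ h) − (f ∘ g) ∘ h = (−1)^{(n−1)(q−1)} ( f ∘ (h ∘ g) − (f ∘ h) ∘ g )`. -/
theorem gerstenhaber_pre_jacobi (m n q : ℕ) (hm : 1 ≤ m) (hn : 1 ≤ n) (hq : 1 ≤ q)
    (f : MultilinearMap R (fun _ : Fin m => A) A)
    (g : MultilinearMap R (fun _ : Fin n => A) A)
    (h : MultilinearMap R (fun _ : Fin q => A) A) :
    circ m (n + q - 1) (toC f) (circ n q (toC g) (toC h))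
        - circ (m + n - 1) q (circ m n (toC f) (toC g)) (toC h) =
      ((-1 : ℤ) ^ ((n - 1) * (q - 1))) •
        (circ m (q + n - 1) (toC f) (circ q n (toC h) (toC g))
          - circ (m + q - 1) n (circ m q (toC f) (toC h)) (toC g)) := by
  funext a
  have E1 := key f g h hn hq a
  have E2 := key f h g hq hn a
  simp only [Pi.sub_apply, Pi.smul_apply]
  rw [E1, E2]
  rw [show ((-1 : ℤ)) ^ ((q - 1) * (n - 1)) = ((-1 : ℤ)) ^ ((n - 1) * (q - 1)) by
    rw [Nat.mul_comm]]
  set c : ℤ := ((-1 : ℤ)) ^ ((n - 1) * (q - 1)) with hc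
  have hcc : ∀ x : A, c • c • x = x := by
    intro x
    rw [smul_smul, hc, ← pow_add,
      show (n - 1) * (q - 1) + (n - 1) * (q - 1) = 2 * ((n - 1) * (q - 1)) from
        (two_mul _).symm, pow_mul]
    norm_num
  rw [smul_sub, smul_add, smul_add, hcc]
  abel
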